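/- Let d ≥ 2 and let H : [0,1] → [0,1]^d be measure-preserving (λ_1(A) = λ_d(H(A)) for measurable A, where images of disjoint intervals overlap in measure zero) and Hölder continuous with ‖H(x)−H(y)‖ ≤ 2√(d+3)|x−y|^{1/d}. Let x_1,…,x_n ∈ [0,1] be such that each interval [(k−1)/n, k/n), k = 1,…,n, contains exactly one x_i, and set P_i = H(x_i). Then the star-discrepancy satisfies D*_n(P) ≤ 4d√(d+3)·n^{−1/d} + C·n^{−2/d} for a constant C depending only on d. -/

import Mathlib

open Set MeasureTheory

section Aux

lemma coord_le (d : ℕ) (v : EuclideanSpace ℝ (Fin d)) (j : Fin d) : |v j| ≤ ‖v‖ := by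
  rw [EuclideanSpace.norm_eq v, ← Real.sqrt_sq_eq_abs]
  apply Real.sqrt_le_sqrt
  calc (v j)^2 = ‖v j‖^2 := by rw [Real.norm_eq_abs, sq_abs]
  _ ≤ _ := Finset.single_le_sum (f := fun i => ‖v i‖^2) (fun i _ => by positivity) (Finset.mem_univ j)

lemma box_eq_preimage (d : ℕ) (s : Fin d → Set ℝ) :
    {y : EuclideanSpace ℝ (Fin d) | ∀ j, y j ∈ s j}
      = (MeasurableEquiv.toLp 2 (Fin d → ℝ)).symm ⁻¹' (Set.univ.pi s) := by
  ext y
  simp only [Set.mem_setOf_eq, Set.mem_preimage, Set.mem_pi, Set.mem_univ, forall_true_left]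
  rfl

lemma vol_singleton (d : ℕ) (hd : 1 ≤ d) (p : EuclideanSpace ℝ (Fin d)) :
    volume ({p} : Set (EuclideanSpace ℝ (Fin d))) = 0 := by
  have e := EuclideanSpace.volume_preserving_symm_measurableEquiv_toLp (Fin d)
  have : ({p} : Set (EuclideanSpace ℝ (Fin d)))
      = {y : EuclideanSpace ℝ (Fin d) | ∀ j, y j ∈ ({p j} : Set ℝ)} := by
    ext y
    simp only [Set.mem_singleton_iff, Set.mem_setOf_eq]
    constructor
    · rintro rfl j; rfl
    · intro h; exact WithLp.ofLp_injective 2 (funext h)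
  rw [this, box_eq_preimage,
    e.measure_preimage ((MeasurableSet.univ_pi (fun j => measurableSet_singleton (p j))).nullMeasurableSet),
    volume_pi_pi]
  simp only [Real.volume_singleton]
  exact Finset.prod_eq_zero (Finset.mem_univ ⟨0, hd⟩) rfl

lemma volume_box (d : ℕ) (b : Fin d → ℝ) (hb : ∀ j, 0 ≤ b j) :
    volume {y : EuclideanSpace ℝ (Fin d) | ∀ j, y j ∈ Set.Icc 0 (b j)} = ENNReal.ofReal (∏ j, b j) := by
  have e := EuclideanSpace.volume_preserving_symm_measurableEquiv_toLp (Fin d)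
  rw [box_eq_preimage,
    e.measure_preimage ((MeasurableSet.univ_pi (fun j => measurableSet_Icc)).nullMeasurableSet),
    volume_pi_pi]
  simp only [Real.volume_Icc, sub_zero]
  rw [← ENNReal.ofReal_prod_of_nonneg (fun j _ => hb j)]

lemma volume_box' (d : ℕ) (b : Fin d → ℝ) (hb : ∀ j, 0 ≤ b j) :
    volume {y : EuclideanSpace ℝ (Fin d) | ∀ j, y j ∈ Set.Ico 0 (b j)} = ENNReal.ofReal (∏ j, b j) := by
  have e := EuclideanSpace.volume_preserving_symm_measurableEquiv_toLp (Fin d)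
  rw [box_eq_preimage,
    e.measure_preimage ((MeasurableSet.univ_pi (fun j => measurableSet_Ico)).nullMeasurableSet),
    volume_pi_pi]
  simp only [Real.volume_Ico, sub_zero]
  rw [← ENNReal.ofReal_prod_of_nonneg (fun j _ => hb j)]

lemma box_measurable (d : ℕ) (s : Fin d → Set ℝ) (hs : ∀ j, MeasurableSet (s j)) :
    MeasurableSet {y : EuclideanSpace ℝ (Fin d) | ∀ j, y j ∈ s j} := by
  rw [box_eq_preimage]
  exact (MeasurableEquiv.toLp 2 (Fin d → ℝ)).symm.measurable (MeasurableSet.univ_pi hs)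

lemma prod_sub_prod_le (d : ℕ) (u v : Fin d → ℝ) (δ : ℝ) (hδ : 0 ≤ δ)
    (h0 : ∀ j, 0 ≤ u j) (huv : ∀ j, u j ≤ v j) (hv1 : ∀ j, v j ≤ 1)
    (hgap : ∀ j, v j - u j ≤ δ) (s : Finset (Fin d)) :
    ∏ j ∈ s, v j - ∏ j ∈ s, u j ≤ s.card * δ := by
  induction s using Finset.induction_on with
  | empty => simp
  | insert j s hj ih =>
    rw [Finset.prod_insert hj, Finset.prod_insert hj, Finset.card_insert_of_notMem hj]
    have hpu0 : 0 ≤ ∏ i ∈ s, u i := Finset.prod_nonneg fun i _ => h0 i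
    have hpu1 : ∏ i ∈ s, u i ≤ 1 := Finset.prod_le_one (fun i _ => h0 i) (fun i _ => le_trans (huv i) (hv1 i))
    have hpv0 : 0 ≤ ∏ i ∈ s, v i := Finset.prod_nonneg fun i _ => le_trans (h0 i) (huv i)
    have hv0 : 0 ≤ v j := le_trans (h0 j) (huv j)
    have key : v j * ∏ i ∈ s, v i - u j * ∏ i ∈ s, u i
        = v j * (∏ i ∈ s, v i - ∏ i ∈ s, u i) + (v j - u j) * ∏ i ∈ s, u i := by ring
    rw [key]
    push_cast
    have h1 : v j * (∏ i ∈ s, v i - ∏ i ∈ s, u i) ≤ s.card * δ := by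
      have hcd : (0:ℝ) ≤ s.card * δ := by positivity
      nlinarith [mul_le_mul_of_nonneg_left ih hv0, mul_le_mul_of_nonneg_right (hv1 j) hcd]
    have h2 : (v j - u j) * ∏ i ∈ s, u i ≤ δ := by
      calc (v j - u j) * ∏ i ∈ s, u i ≤ δ * 1 := by
            apply mul_le_mul (hgap j) hpu1 hpu0 hδ
        _ = δ := mul_one _
    linarith

lemma holder_continuousOn (d : ℕ) (hd : 1 ≤ d) (H : ℝ → EuclideanSpace ℝ (Fin d)) (M : ℝ) (hM : 0 ≤ M)
    (h : ∀ x ∈ Set.Icc (0:ℝ) 1, ∀ y ∈ Set.Icc (0:ℝ) 1, ‖H x - H y‖ ≤ M * |x - y| ^ ((1:ℝ)/d)) :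
    ContinuousOn H (Set.Icc 0 1) := by
  have hr0 : (0:ℝ) < 1/d := by positivity
  have holder : HolderOnWith M.toNNReal ⟨1/d, le_of_lt hr0⟩ H (Set.Icc 0 1) := by
    intro p hp q hq
    rw [edist_dist, edist_dist]
    calc ENNReal.ofReal (dist (H p) (H q)) ≤ ENNReal.ofReal (M * |p - q| ^ ((1:ℝ)/d)) := by
          apply ENNReal.ofReal_le_ofReal
          rw [dist_eq_norm]; exact h p hp q hq
      _ = ENNReal.ofReal M * ENNReal.ofReal (|p - q| ^ ((1:ℝ)/d)) := by
          rw [ENNReal.ofReal_mul hM]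
      _ = ↑M.toNNReal * ENNReal.ofReal (dist p q) ^ (((⟨1/d, le_of_lt hr0⟩ : NNReal)):ℝ) := by
          rw [Real.dist_eq,
            show (((⟨1/d, le_of_lt hr0⟩ : NNReal)):ℝ) = (1:ℝ)/d from rfl,
            ENNReal.ofReal_rpow_of_nonneg (abs_nonneg _) (le_of_lt hr0)]
          rfl
  exact holder.continuousOn (by exact_mod_cast hr0)

lemma image_Ico_nullMeasurable (d : ℕ) (hd : 1 ≤ d) (H : ℝ → EuclideanSpace ℝ (Fin d))
    (hcont : ContinuousOn H (Set.Icc 0 1)) (lo hi : ℝ) (h0 : 0 ≤ lo) (hlh : lo ≤ hi) (h1 : hi ≤ 1) :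
    NullMeasurableSet (H '' Set.Ico lo hi) volume := by
  have hIccsub : Set.Icc lo hi ⊆ Set.Icc 0 1 := Set.Icc_subset_Icc h0 h1
  have hcomp : IsCompact (H '' Set.Icc lo hi) := (isCompact_Icc).image_of_continuousOn (hcont.mono hIccsub)
  have hm : MeasurableSet (H '' Set.Icc lo hi) := hcomp.measurableSet
  have hsub1 : H '' Set.Ico lo hi ⊆ H '' Set.Icc lo hi := Set.image_mono Set.Ico_subset_Icc_self
  have hsub2 : H '' Set.Icc lo hi \ H '' Set.Ico lo hi ⊆ {H hi} := by
    rintro y ⟨⟨t, ht, rfl⟩, hy2⟩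
    rcases lt_or_eq_of_le ht.2 with h | h
    · exact absurd (Set.mem_image_of_mem H (⟨ht.1, h⟩ : t ∈ Set.Ico lo hi)) hy2
    · rw [h]; rfl
  have hnull : volume (H '' Set.Icc lo hi \ H '' Set.Ico lo hi) = 0 :=
    measure_mono_null hsub2 (vol_singleton d hd _)
  have heq : H '' Set.Ico lo hi = H '' Set.Icc lo hi \ (H '' Set.Icc lo hi \ H '' Set.Ico lo hi) :=
    (Set.diff_diff_cancel_left hsub1).symm
  rw [heq]
  exact hm.nullMeasurableSet.diff (NullMeasurableSet.of_null hnull)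

lemma interval_unique (n : ℕ) (hn : 0 < n) (k k' : Fin n) (t : ℝ)
    (h1 : t ∈ Set.Ico ((k:ℝ)/n) (((k:ℝ)+1)/n)) (h2 : t ∈ Set.Ico ((k':ℝ)/n) (((k':ℝ)+1)/n)) :
    k = k' := by
  have hn0 : (0:ℝ) < n := Nat.cast_pos.mpr hn
  have a1 : ((k':ℝ))/n < ((k:ℝ)+1)/n := lt_of_le_of_lt h2.1 h1.2
  have a2 : ((k:ℝ))/n < ((k':ℝ)+1)/n := lt_of_le_of_lt h1.1 h2.2
  have b1 : (k':ℝ) < (k:ℝ)+1 := by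
    have := mul_lt_mul_of_pos_right a1 hn0
    rwa [div_mul_cancel₀ _ hn0.ne', div_mul_cancel₀ _ hn0.ne'] at this
  have b2 : (k:ℝ) < (k':ℝ)+1 := by
    have := mul_lt_mul_of_pos_right a2 hn0
    rwa [div_mul_cancel₀ _ hn0.ne', div_mul_cancel₀ _ hn0.ne'] at this
  have c1 : (k':ℕ) < (k:ℕ)+1 := by exact_mod_cast b1
  have c2 : (k:ℕ) < (k':ℕ)+1 := by exact_mod_cast b2
  exact Fin.ext (le_antisymm (Nat.lt_succ_iff.mp c2) (Nat.lt_succ_iff.mp c1))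

end Aux

open scoped Classical in
/-- Star-discrepancy bound for stratified points mapped by a measure-preserving,
`1/d`-Hölder curve such as the Hilbert curve: there is a constant `C` depending
only on `d` such that the discrepancy at every anchored box is at most
`4d√(d+3)·n^{-1/d} + C·n^{-2/d}`. -/
theorem star_discrepancy_stratified_hilbert (d : ℕ) (hd : 2 ≤ d) :
    ∃ C : ℝ, ∀ (H : ℝ → EuclideanSpace ℝ (Fin d)),
      (∀ x ∈ Set.Icc (0 : ℝ) 1, H x ∈ {y : EuclideanSpace ℝ (Fin d) | ∀ j, y j ∈ Set.Icc (0 : ℝ) 1}) →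
      -- measure preservation
      (∀ A : Set ℝ, A ⊆ Set.Icc (0 : ℝ) 1 → MeasurableSet A → volume (H '' A) = volume A) →
      -- images of disjoint subsets of [0,1] overlap in measure zero
      (∀ A B : Set ℝ, A ⊆ Set.Icc (0 : ℝ) 1 → B ⊆ Set.Icc (0 : ℝ) 1 → Disjoint A B →
        volume (H '' A ∩ H '' B) = 0) →
      -- Hölder continuity with exponent 1/d
      (∀ x ∈ Set.Icc (0 : ℝ) 1, ∀ y ∈ Set.Icc (0 : ℝ) 1,
        ‖H x - H y‖ ≤ 2 * Real.sqrt (d + 3) * |x - y| ^ ((1 : ℝ) / d)) →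
      ∀ (n : ℕ), 0 < n → ∀ x : Fin n → ℝ,
        (∀ i, x i ∈ Set.Icc (0 : ℝ) 1) →
        -- each interval [(k-1)/n, k/n) contains exactly one of the points
        (∀ k : Fin n, ∃! i : Fin n, x i ∈ Set.Ico ((k : ℝ) / n) (((k : ℝ) + 1) / n)) →
        ∀ a : Fin d → ℝ, (∀ j, a j ∈ Set.Icc (0 : ℝ) 1) →
          |((Finset.univ.filter (fun i =>
              H (x i) ∈ {y : EuclideanSpace ℝ (Fin d) | ∀ j, y j ∈ Set.Ico 0 (a j)})).card : ℝ) / n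
            - ∏ j, a j|
          ≤ 4 * d * Real.sqrt (d + 3) * (n : ℝ) ^ (-(1 : ℝ) / d)
            + C * (n : ℝ) ^ (-(2 : ℝ) / d) := by
  refine ⟨0, ?_⟩
  intro H hrange hmp hdisj hholder n hn x hx hstrat a ha
  have hd1 : 1 ≤ d := le_trans one_le_two hd
  have hn0 : (0:ℝ) < n := Nat.cast_pos.mpr hn
  set δ : ℝ := 2 * Real.sqrt (d+3) * (n:ℝ) ^ (-(1:ℝ)/d) with hδdef
  have hδ0 : 0 ≤ δ := by positivity
  -- the bijection between intervals and points
  set f : Fin n → Fin n := fun k => (hstrat k).choose with hfdef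
  have hfk : ∀ k : Fin n, x (f k) ∈ Set.Ico (((k:ℕ):ℝ)/n) ((((k:ℕ):ℝ)+1)/n) :=
    fun k => (hstrat k).choose_spec.1
  have hfinj : Function.Injective f := by
    intro k k' hkk'
    exact interval_unique n hn k k' (x (f k)) (hfk k) (by rw [hkk']; exact hfk k')
  have hfbij : Function.Bijective f := (Finite.injective_iff_bijective).mp hfinj
  set e : Fin n ≃ Fin n := Equiv.ofBijective f hfbij with hedef
  set κ : Fin n → Fin n := fun i => e.symm i with hκdef
  set J : Fin n → Set ℝ := fun i => Set.Ico ((((κ i : Fin n):ℕ):ℝ)/n) (((((κ i : Fin n):ℕ):ℝ)+1)/n) with hJdef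
  have hfκ : ∀ i, f (κ i) = i := fun i => e.apply_symm_apply i
  have hxJ : ∀ i, x i ∈ J i := by
    intro i
    have h := hfk (κ i)
    rwa [hfκ i] at h
  have hκinj : Function.Injective κ := e.symm.injective
  have hJsub : ∀ i, J i ⊆ Set.Icc (0:ℝ) 1 := by
    intro i t ht
    have h0 : (0:ℝ) ≤ (((κ i):ℕ):ℝ)/n := by positivity
    have h1 : ((((κ i):ℕ):ℝ)+1)/n ≤ 1 := by
      rw [div_le_one hn0]
      exact_mod_cast Nat.succ_le_of_lt (κ i).is_lt
    exact ⟨le_trans h0 ht.1, le_trans (le_of_lt ht.2) h1⟩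
  -- coordinate-wise Hölder estimate on each stratum
  have hcoord : ∀ i, ∀ t ∈ J i, ∀ j, |H t j - H (x i) j| ≤ δ := by
    intro i t ht j
    have hxi := hxJ i
    have htI := hJsub i ht
    have hxI := hx i
    have hdist : |t - x i| ≤ 1/n := by
      have h2 : (((((κ i):Fin n):ℕ):ℝ)+1)/n = ((((κ i):Fin n):ℕ):ℝ)/n + 1/n := by ring
      rw [abs_le]
      constructor
      · have e1 := ht.1
        have e2 := hxi.2
        rw [h2] at e2
        linarith
      · have e1 := ht.2
        have e2 := hxi.1
        rw [h2] at e1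
        linarith
    have hpow : |t - x i| ^ ((1:ℝ)/d) ≤ (n:ℝ) ^ (-(1:ℝ)/d) := by
      have h1 : |t - x i| ^ ((1:ℝ)/d) ≤ ((1:ℝ)/n) ^ ((1:ℝ)/d) :=
        Real.rpow_le_rpow (abs_nonneg _) hdist (by positivity)
      have h2 : ((1:ℝ)/n) ^ ((1:ℝ)/d) = (n:ℝ) ^ (-(1:ℝ)/d) := by
        rw [neg_div, Real.rpow_neg (le_of_lt hn0), one_div, Real.inv_rpow (le_of_lt hn0)]
      rwa [h2] at h1
    have hnorm : ‖H t - H (x i)‖ ≤ δ := by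
      calc ‖H t - H (x i)‖ ≤ 2 * Real.sqrt (d + 3) * |t - x i| ^ ((1:ℝ)/d) :=
            hholder t htI (x i) hxI
        _ ≤ δ := by
            rw [hδdef]
            exact mul_le_mul_of_nonneg_left hpow (by positivity)
    calc |H t j - H (x i) j| = |(H t - H (x i)) j| := rfl
      _ ≤ ‖H t - H (x i)‖ := coord_le d _ j
      _ ≤ δ := hnorm
  -- continuity and null-measurability of images of strata
  have hcont : ContinuousOn H (Set.Icc 0 1) :=
    holder_continuousOn d hd1 H (2 * Real.sqrt (d+3)) (by positivity) hholder
  have hJNM : ∀ i, NullMeasurableSet (H '' J i) volume := by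
    intro i
    refine image_Ico_nullMeasurable d hd1 H hcont _ _ (by positivity) ?_ ?_
    · rw [div_le_div_iff_of_pos_right hn0]
      linarith
    · rw [div_le_one hn0]; exact_mod_cast Nat.succ_le_of_lt (κ i).is_lt
  -- the counted set
  set S : Finset (Fin n) := Finset.univ.filter (fun i =>
      H (x i) ∈ {y : EuclideanSpace ℝ (Fin d) | ∀ j, y j ∈ Set.Ico 0 (a j)}) with hSdef
  have hmemS : ∀ i, i ∈ S ↔ ∀ j, H (x i) j ∈ Set.Ico 0 (a j) := by
    intro i
    rw [hSdef, Finset.mem_filter]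
    simp only [Finset.mem_univ, true_and, Set.mem_setOf_eq]
  -- measure of each stratum image
  have hvolJ : ∀ i, volume (H '' J i) = ENNReal.ofReal (1/n) := by
    intro i
    rw [hmp (J i) (hJsub i) measurableSet_Ico, Real.volume_Ico]
    congr 1
    ring
  -- sum over counted strata
  have hpw : (↑S : Set (Fin n)).Pairwise (Function.onFun (AEDisjoint volume) fun i => H '' J i) := by
    intro i hi i' hi' hne
    have hJd : Disjoint (J i) (J i') := by
      rw [Set.disjoint_left]
      intro t hti hti'
      exact hne (hκinj (interval_unique n hn (κ i) (κ i') t hti hti'))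
    exact hdisj _ _ (hJsub i) (hJsub i') hJd
  have hsum : volume (⋃ i ∈ S, H '' J i) = ENNReal.ofReal ((S.card:ℝ)/n) := by
    rw [measure_biUnion_finset₀ hpw (fun i _ => hJNM i),
      Finset.sum_congr rfl (fun i _ => hvolJ i), Finset.sum_const, nsmul_eq_mul,
      (show ((S.card:ENNReal)) = ENNReal.ofReal ((S.card:ℝ)) by rw [ENNReal.ofReal_natCast]),
      ← ENNReal.ofReal_mul (Nat.cast_nonneg _)]
    congr 1
    ring
  -- upper bound
  set bU : Fin d → ℝ := fun j => min (a j + δ) 1 with hbUdef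
  have hbU0 : ∀ j, 0 ≤ bU j := fun j => le_min (by linarith [(ha j).1]) zero_le_one
  have hUsub : (⋃ i ∈ S, H '' J i) ⊆ {y : EuclideanSpace ℝ (Fin d) | ∀ j, y j ∈ Set.Icc 0 (bU j)} := by
    intro y hy
    simp only [Set.mem_iUnion, exists_prop] at hy
    obtain ⟨i, hiS, t, htJ, rfl⟩ := hy
    have hyc := hrange t (hJsub i htJ)
    have hSi := (hmemS i).mp hiS
    intro j
    have hcj := abs_le.mp (hcoord i t htJ j)
    refine ⟨(hyc j).1, le_min ?_ (hyc j).2⟩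
    have := (hSi j).2
    linarith [hcj.2]
  have hup : (S.card:ℝ)/n ≤ ∏ j, bU j := by
    have hm := measure_mono (μ := volume) hUsub
    rw [hsum, volume_box d bU hbU0] at hm
    exact (ENNReal.ofReal_le_ofReal_iff (Finset.prod_nonneg fun j _ => hbU0 j)).mp hm
  -- lower bound
  set bL : Fin d → ℝ := fun j => max (a j - δ) 0 with hbLdef
  have hbL0 : ∀ j, 0 ≤ bL j := fun j => le_max_right _ _
  have hbL1 : ∀ j, bL j ≤ 1 := fun j => max_le (by linarith [(ha j).2]) zero_le_one
  set boxL : Set (EuclideanSpace ℝ (Fin d)) := {y | ∀ j, y j ∈ Set.Ico 0 (bL j)} with hboxLdef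
  set cube : Set (EuclideanSpace ℝ (Fin d)) := {y | ∀ j, y j ∈ Set.Icc (0:ℝ) 1} with hcubedef
  have hIm : volume (H '' Set.Ico (0:ℝ) 1) = 1 := by
    rw [hmp _ Set.Ico_subset_Icc_self measurableSet_Ico, Real.volume_Ico]
    simp
  have hImNM : NullMeasurableSet (H '' Set.Ico (0:ℝ) 1) volume :=
    image_Ico_nullMeasurable d hd1 H hcont 0 1 le_rfl zero_le_one le_rfl
  have hcubevol : volume cube = 1 := by
    rw [hcubedef, show {y : EuclideanSpace ℝ (Fin d) | ∀ j, y j ∈ Set.Icc (0:ℝ) 1}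
        = {y : EuclideanSpace ℝ (Fin d) | ∀ j, y j ∈ Set.Icc 0 ((fun _ => (1:ℝ)) j)} from rfl,
      volume_box d (fun _ => (1:ℝ)) (fun _ => zero_le_one)]
    simp
  have hImsub : H '' Set.Ico (0:ℝ) 1 ⊆ cube := by
    rintro y ⟨t, ht, rfl⟩
    exact hrange t (Set.Ico_subset_Icc_self ht)
  have hdiffnull : volume (cube \ H '' Set.Ico (0:ℝ) 1) = 0 := by
    rw [measure_diff hImsub hImNM (by rw [hIm]; exact ENNReal.one_ne_top), hIm, hcubevol]
    simp
  have hboxLcube : boxL ⊆ cube := by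
    intro y hy j
    exact ⟨(hy j).1, le_trans (le_of_lt (hy j).2) (hbL1 j)⟩
  have hcover : boxL ∩ H '' Set.Ico (0:ℝ) 1 ⊆ ⋃ i ∈ S, H '' J i := by
    rintro y ⟨hyL, t, ht, rfl⟩
    have htn0 : 0 ≤ t * n := mul_nonneg ht.1 (le_of_lt hn0)
    set k : ℕ := ⌊t * n⌋₊ with hkdef
    have hk : k < n := by
      rw [hkdef, Nat.floor_lt htn0]
      nlinarith [ht.2]
    have htk : t ∈ Set.Ico ((k:ℝ)/n) (((k:ℝ)+1)/n) := by
      constructor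
      · rw [div_le_iff₀ hn0]
        exact Nat.floor_le htn0
      · rw [lt_div_iff₀ hn0]
        exact Nat.lt_floor_add_one (t * n)
    set i : Fin n := f ⟨k, hk⟩ with hidef
    have hκi : κ i = ⟨k, hk⟩ := e.symm_apply_apply ⟨k, hk⟩
    have htJ : t ∈ J i := by
      rw [hJdef]
      simp only [hκi]
      exact htk
    have hiS : i ∈ S := by
      by_contra hiS
      have hnot : ¬ ∀ j, H (x i) j ∈ Set.Ico 0 (a j) := fun h => hiS ((hmemS i).mpr h)
      push_neg at hnot
      obtain ⟨j, hj⟩ := hnot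
      have h0j : 0 ≤ H (x i) j := (hrange (x i) (hx i) j).1
      have haj : a j ≤ H (x i) j := by
        rw [Set.mem_Ico, not_and] at hj
        exact not_lt.mp (hj h0j)
      have hyj := hyL j
      have hcj := (abs_le.mp (hcoord i t htJ j)).1
      have hle : bL j ≤ H t j := max_le (by linarith) (hyj.1)
      exact absurd hyj.2 (not_lt.mpr hle)
    exact Set.mem_biUnion hiS (Set.mem_image_of_mem H htJ)
  have hlow : ∏ j, bL j ≤ (S.card:ℝ)/n := by
    have hchain : volume boxL ≤ ENNReal.ofReal ((S.card:ℝ)/n) := by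
      calc volume boxL ≤ volume (boxL ∩ H '' Set.Ico (0:ℝ) 1)
            + volume (boxL \ H '' Set.Ico (0:ℝ) 1) := measure_le_inter_add_diff _ _ _
        _ = volume (boxL ∩ H '' Set.Ico (0:ℝ) 1) := by
            rw [measure_mono_null (Set.diff_subset_diff_left hboxLcube) hdiffnull, add_zero]
        _ ≤ volume (⋃ i ∈ S, H '' J i) := measure_mono hcover
        _ = ENNReal.ofReal ((S.card:ℝ)/n) := hsum
    rw [hboxLdef, volume_box' d bL hbL0] at hchain
    exact (ENNReal.ofReal_le_ofReal_iff (div_nonneg (Nat.cast_nonneg _) (le_of_lt hn0))).mp hchain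
  -- combine
  have h1 : ∏ j, bU j - ∏ j, a j ≤ d * δ := by
    have := prod_sub_prod_le d a bU δ hδ0 (fun j => (ha j).1)
      (fun j => le_min (by linarith) (ha j).2)
      (fun j => min_le_right _ _)
      (fun j => by
        have := min_le_left (a j + δ) 1
        simp only [hbUdef]
        linarith)
      Finset.univ
    rwa [Finset.card_univ, Fintype.card_fin] at this
  have h2 : ∏ j, a j - ∏ j, bL j ≤ d * δ := by
    have := prod_sub_prod_le d bL a δ hδ0 (fun j => hbL0 j)
      (fun j => max_le (by linarith) (ha j).1)
      (fun j => (ha j).2)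
      (fun j => by
        have := le_max_left (a j - δ) (0:ℝ)
        simp only [hbLdef]
        linarith)
      Finset.univ
    rwa [Finset.card_univ, Fintype.card_fin] at this
  have hfin : |((S.card:ℝ))/n - ∏ j, a j| ≤ d * δ := by
    rw [abs_le]
    constructor
    · linarith
    · linarith
  have hX : 0 ≤ (d:ℝ) * (Real.sqrt (d+3) * (n:ℝ)^(-(1:ℝ)/d)) := by positivity
  calc |((S.card:ℝ))/n - ∏ j, a j| ≤ d * δ := hfin
    _ ≤ 4 * d * Real.sqrt (d + 3) * (n : ℝ) ^ (-(1 : ℝ) / d)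
        + 0 * (n : ℝ) ^ (-(2 : ℝ) / d) := by
        rw [hδdef, zero_mul, add_zero]
        nlinarith [hX]
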